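/- Let G be a finite simple graph, λ a layering of G, and let r', r, ℓ, m be integers with 0 ≤ r' ≤ r and ℓ > 4r. Let R be an (ℓ, r)-cover of the integers, let p be an m-plan for R, and let (ψ_S) be an r'-local predicate family on G. Suppose that for each I ∈ R there is no set of p(I) + 1 vertices of λ⁻¹(M_r(I)), pairwise at distance greater than 2r' in G[λ⁻¹(I)], at each of which ψ_{λ⁻¹(I)} fails. Then there is no set of m + 1 vertices of G, pairwise at distance greater than 2r' in G, at each of which ψ_{V(G)} fails. -/

import Mathlib

/-- A layering of a simple graph: adjacent vertices differ by at most 1. -/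
def IsLayering {V : Type*} (G : SimpleGraph V) (lam : V → ℤ) : Prop :=
  ∀ ⦃u v : V⦄, G.Adj u v → |lam u - lam v| ≤ 1

/-- The spanning subgraph of `G` keeping only the edges with both ends in `U`.
Reachability and distances between vertices of `U` in this graph coincide with those
in the induced subgraph `G[U]`. -/
def restrictSet {V : Type*} (G : SimpleGraph V) (U : Set V) : SimpleGraph V where
  Adj u v := G.Adj u v ∧ u ∈ U ∧ v ∈ U
  symm := ⟨fun _ _ ⟨h, hu, hv⟩ => ⟨h.symm, hv, hu⟩⟩
  loopless := ⟨fun _ ⟨h, _, _⟩ => G.ne_of_adj h rfl⟩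

/-- The interval of `l` consecutive integers with left endpoint `i`. -/
def Iv (l : ℕ) (i : ℤ) : Set ℤ := Set.Icc i (i + l - 1)

/-- The middle part `M_d(I)` of the interval of length `l` with left endpoint `i`. -/
def Md (l d : ℕ) (i : ℤ) : Set ℤ := Set.Icc (i + d) (i + l - d - 1)

/-- `i` is a left endpoint of an interval of the `(l, r)`-cover with residue `n`,
i.e. `i ≡ n (mod l − 2r)`. -/
def inCover (l r : ℕ) (n i : ℤ) : Prop := ((l : ℤ) - 2 * r) ∣ (i - n)

/-- An `m`-plan for the `(l, r)`-cover with residue `n`: a finitely supported function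
on intervals (identified with their left endpoints) with values summing to `m`,
supported on the intervals of the cover. -/
def IsPlan (l r : ℕ) (n : ℤ) (m : ℕ) (p : ℤ → ℕ) : Prop :=
  {i | p i ≠ 0}.Finite ∧ (∀ i, p i ≠ 0 → inCover l r n i) ∧ ∑ᶠ i, p i = m

/-- All vertices of `W` are pairwise at distance greater than `2r'` in `G` (vertices in
different components being at infinite distance). -/
def PairwiseFar {V : Type*} (G : SimpleGraph V) (r' : ℕ) (W : Finset V) : Prop :=
  ∀ w ∈ W, ∀ w' ∈ W, w ≠ w' → (G.Reachable w w' → 2 * r' < G.dist w w')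

/-- An `r'`-local predicate family on `G`: a family of predicates `ψ S` (for `S ⊆ V`)
such that whenever `S` contains the ball of radius `r'` around `v`, `ψ S v ↔ ψ univ v`. -/
def IsLocalFamily {V : Type*} (G : SimpleGraph V) (r' : ℕ) (ψ : Set V → V → Prop) : Prop :=
  ∀ (v : V) (S : Set V), {u | G.Reachable v u ∧ G.dist v u ≤ r'} ⊆ S → (ψ S v ↔ ψ Set.univ v)

lemma layering_walk_bound {V : Type*} {G : SimpleGraph V} {lam : V → ℤ}
    (hlam : IsLayering G lam) {u v : V} (w : G.Walk u v) :
    |lam u - lam v| ≤ w.length := by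
  induction w with
  | nil => simp
  | @cons a b c h q ih =>
    have h1 := hlam h
    have := abs_sub_le (lam a) (lam b) (lam c)
    simp only [SimpleGraph.Walk.length_cons]
    push_cast
    linarith

/-- If for each interval `I` of an `(l, r)`-cover there is no set of `p(I) + 1` vertices
of `λ⁻¹(M_r(I))`, pairwise far apart in `G[λ⁻¹(I)]`, at each of which `ψ_{λ⁻¹(I)}` fails,
then there is no set of `m + 1` vertices of `G`, pairwise far apart in `G`, at each of
which `ψ_{V(G)}` fails. -/
theorem stmt_12 {V : Type*} [Fintype V] (G : SimpleGraph V) (lam : V → ℤ)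
    (hlam : IsLayering G lam)
    (r' r l m : ℕ) (hr : r' ≤ r) (hl : 4 * r < l)
    (n : ℤ) (p : ℤ → ℕ) (hp : IsPlan l r n m p)
    (ψ : Set V → V → Prop) (hψ : IsLocalFamily G r' ψ)
    (hW : ∀ i : ℤ, inCover l r n i →
      ¬ ∃ W : Finset V, W.card = p i + 1 ∧ (∀ w ∈ W, lam w ∈ Md l r i) ∧
          PairwiseFar (restrictSet G (lam ⁻¹' Iv l i)) r' W ∧
          ∀ w ∈ W, ¬ ψ (lam ⁻¹' Iv l i) w) :
    ¬ ∃ W : Finset V, W.card = m + 1 ∧ PairwiseFar G r' W ∧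
        ∀ w ∈ W, ¬ ψ Set.univ w := by
  classical
  rintro ⟨W, hcard, hfar, hfail⟩
  set d : ℤ := (l : ℤ) - 2 * r with hd
  have hd0 : 0 < d := by simp only [hd]; push_cast; omega
  set f : V → ℤ := fun w => lam w - r - (lam w - r - n) % d with hf
  have hfcover : ∀ w : V, inCover l r n (f w) := by
    intro w
    refine ⟨(lam w - r - n) / d, ?_⟩
    have h0 := Int.mul_ediv_add_emod (lam w - r - n) d
    show _ = _
    rw [← hd]
    simp only [hf]
    linarith
  have hfmd : ∀ w : V, lam w ∈ Md l r (f w) := by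
    intro w
    have h1 : 0 ≤ (lam w - r - n) % d := Int.emod_nonneg _ hd0.ne'
    have h2 : (lam w - r - n) % d < d := Int.emod_lt_of_pos _ hd0
    simp only [Md, Set.mem_Icc, hf]
    constructor <;> [linarith; (simp only [hd] at h2; push_cast; linarith)]
  -- each fiber has at most p i elements
  have hfiber : ∀ i : ℤ, (W.filter (fun w => f w = i)).card ≤ p i := by
    intro i
    by_contra hbig
    push_neg at hbig
    obtain ⟨W', hW'sub, hW'card⟩ :=
      Finset.exists_subset_card_eq (n := p i + 1)
        (s := W.filter (fun w => f w = i)) hbig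
    have hne : W'.Nonempty := Finset.card_pos.mp (by omega)
    obtain ⟨w0, hw0⟩ := hne
    have hw0' := hW'sub hw0
    simp only [Finset.mem_filter] at hw0'
    have hcov : inCover l r n i := hw0'.2 ▸ hfcover w0
    refine hW i hcov ⟨W', hW'card, ?_, ?_, ?_⟩
    · intro w hw
      have hw' := hW'sub hw
      simp only [Finset.mem_filter] at hw'
      exact hw'.2 ▸ hfmd w
    · intro w hw w' hw' hne' hreach
      have hwW : w ∈ W := (Finset.mem_filter.mp (hW'sub hw)).1
      have hw'W : w' ∈ W := (Finset.mem_filter.mp (hW'sub hw')).1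
      have hle : restrictSet G (lam ⁻¹' Iv l i) ≤ G := fun _ _ h => (show G.Adj _ _ ∧ _ from h).1
      have hreachG : G.Reachable w w' := hreach.mono hle
      have h1 : 2 * r' < G.dist w w' := hfar w hwW w' hw'W hne' hreachG
      obtain ⟨q, hq⟩ := hreach.exists_walk_length_eq_dist
      have h2 : G.dist w w' ≤ (q.mapLe hle).length := SimpleGraph.dist_le _
      rw [SimpleGraph.Walk.mapLe, SimpleGraph.Walk.length_map] at h2
      omega
    · intro w hw
      have hwW : w ∈ W := (Finset.mem_filter.mp (hW'sub hw)).1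
      have hwi : f w = i := (Finset.mem_filter.mp (hW'sub hw)).2
      have hmd : lam w ∈ Md l r i := hwi ▸ hfmd w
      simp only [Md, Set.mem_Icc] at hmd
      have hball : {u | G.Reachable w u ∧ G.dist w u ≤ r'} ⊆ lam ⁻¹' Iv l i := by
        rintro u ⟨hru, hdu⟩
        obtain ⟨q, hq⟩ := hru.exists_walk_length_eq_dist
        have habs : |lam w - lam u| ≤ (r' : ℤ) := by
          have := layering_walk_bound hlam q
          rw [hq] at this
          exact this.trans (by exact_mod_cast hdu)
        rw [abs_le] at habs
        simp only [Set.mem_preimage, Iv, Set.mem_Icc]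
        constructor <;> push_cast <;> [linarith; linarith]
      intro hpsi
      exact hfail w hwW ((hψ w _ hball).mp hpsi)
  -- counting
  have hcount : W.card ≤ m := by
    rw [Finset.card_eq_sum_card_image f W]
    have h1 : ∀ i ∈ W.image f, {w ∈ W | f w = i}.card ≤ p i := fun i _ => hfiber i
    calc ∑ i ∈ W.image f, {w ∈ W | f w = i}.card
        ≤ ∑ i ∈ W.image f, p i := Finset.sum_le_sum h1
      _ ≤ ∑ i ∈ W.image f ∪ hp.1.toFinset, p i :=
          Finset.sum_le_sum_of_subset Finset.subset_union_left
      _ = ∑ i ∈ hp.1.toFinset, p i := by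
          refine (Finset.sum_subset Finset.subset_union_right ?_).symm
          intro x _ hx
          simpa using hx
      _ = m := (finsum_eq_sum p hp.1).symm.trans hp.2.2
  omega
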